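/- For every finite connected simple graph G = (V,E) and every K ⊆ V with |K| ≥ 2: LP_ST(G,K) ≤ ST(G,K) ≤ 2 · LP_ST(G,K). -/

import Mathlib

set_option linter.unusedSectionVars false
set_option linter.unusedVariables false
set_option linter.unusedTactic false
set_option maxHeartbeats 1000000


open Finset
open scoped Classical

variable {V : Type} [Fintype V] [DecidableEq V]

/-- A cut of a graph on vertex set `V`: a nonempty proper subset of the vertices. -/
def IsCut (C : Finset V) : Prop := C.Nonempty ∧ C ≠ Finset.univ

/-- The unordered pair `e` crosses the cut `C`: exactly one of its endpoints lies in `C`. -/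
def Crosses (C : Finset V) (e : Sym2 V) : Prop :=
  ∃ u v, e = s(u, v) ∧ u ∈ C ∧ v ∉ C

/-- `δ(C)`: the edges of `G` with exactly one endpoint in `C`. -/
noncomputable def cutEdges (G : SimpleGraph V) (C : Finset V) : Finset (Sym2 V) :=
  G.edgeFinset.filter (Crosses C)

/-- `ST(G,K)`: the minimum number of edges of a connected subgraph of `G` whose vertex set
contains `K` (minimum Steiner tree cost with unit edge weights). -/
noncomputable def steinerCost (G : SimpleGraph V) (K : Finset V) : ℕ :=
  sInf { n | ∃ H : G.Subgraph, H.Connected ∧ ↑K ⊆ H.verts ∧ H.edgeSet.ncard = n }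

/-- The optimum value of `LP_ST(G,K)`: minimize `∑_{e∈E} x_e` subject to
`∑_{e∈δ(C)} x_e ≥ 1` for every cut `C` separating `K`, `x ≥ 0`. -/
noncomputable def LPST (G : SimpleGraph V) (K : Finset V) : ℝ :=
  sInf { y | ∃ x : Sym2 V → ℝ, (∀ e, 0 ≤ x e) ∧
    (∀ C : Finset V, IsCut C → (K ∩ C).Nonempty → (K \ C).Nonempty →
      1 ≤ ∑ e ∈ cutEdges G C, x e) ∧
    y = ∑ e ∈ G.edgeFinset, x e }

namespace Steiner6

variable {V : Type} [Fintype V] [DecidableEq V] (G : SimpleGraph V) (K : Finset V)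

/-- base relation at level `r` : both in `K` and distance at most `r`. -/
def bse (r : ℕ) : V → V → Prop := fun a b => a ∈ K ∧ b ∈ K ∧ G.dist a b ≤ r

/-- cluster relation at level `r`. -/
def ClRel (r : ℕ) : V → V → Prop := Relation.ReflTransGen (bse G K r)

/-- the cluster of `t` at level `r`. -/
noncomputable def Cl (r : ℕ) (t : V) : Finset V := K.filter (fun u => ClRel G K r t u)

/-- the moat around the cluster of `t` at level `r`. -/
noncomputable def Mo (r : ℕ) (t : V) : Finset V :=
  Finset.univ.filter (fun w => ∃ u ∈ Cl G K r t, 2 * G.dist w u ≤ r)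

/-- the first level at which all terminals are chain-connected. -/
noncomputable def TT : ℕ := sInf {s : ℕ | ∀ t ∈ K, ∀ t' ∈ K, ClRel G K s t t'}

/-- number of clusters at level `r`. -/
noncomputable def cc (r : ℕ) : ℕ := (K.image (Cl G K r)).card

variable {G K}

lemma clrel_symm {r : ℕ} : Symmetric (ClRel G K r) :=
  fun a b hab => (@Relation.ReflTransGen.stdSymm _ _ ⟨fun a b h => ⟨h.2.1, h.1, by
    rw [SimpleGraph.dist_comm]; exact h.2.2⟩⟩).symm a b hab

lemma clrel_mono {r r' : ℕ} (h : r ≤ r') {a b : V} (hab : ClRel G K r a b) :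
    ClRel G K r' a b :=
  Relation.ReflTransGen.mono (fun a b hb => ⟨hb.1, hb.2.1, hb.2.2.trans h⟩) _ _ hab

lemma mem_Cl {r : ℕ} {t u : V} : u ∈ Cl G K r t ↔ u ∈ K ∧ ClRel G K r t u := by
  simp [Cl]

lemma self_mem_Cl {r : ℕ} {t : V} (ht : t ∈ K) : t ∈ Cl G K r t :=
  mem_Cl.2 ⟨ht, Relation.ReflTransGen.refl⟩

lemma Cl_subset_K {r : ℕ} {t : V} : Cl G K r t ⊆ K := Finset.filter_subset _ _

lemma Cl_eq_of_rel {r : ℕ} {t t' : V} (h : ClRel G K r t t') :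
    Cl G K r t = Cl G K r t' := by
  ext u
  simp only [mem_Cl, and_congr_right_iff]
  exact fun _ => ⟨fun h2 => (clrel_symm h).trans h2, fun h2 => h.trans h2⟩

lemma Cl_mono {r r' : ℕ} (h : r ≤ r') {t : V} : Cl G K r t ⊆ Cl G K r' t := by
  intro u hu
  rw [mem_Cl] at hu ⊢
  exact ⟨hu.1, clrel_mono h hu.2⟩

lemma mem_Mo {r : ℕ} {t w : V} :
    w ∈ Mo G K r t ↔ ∃ u ∈ Cl G K r t, 2 * G.dist w u ≤ r := by
  simp [Mo]

lemma Mo_mono {r r' : ℕ} (h : r ≤ r') {t : V} : Mo G K r t ⊆ Mo G K r' t := by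
  intro w hw
  rw [mem_Mo] at hw ⊢
  obtain ⟨u, hu, hd⟩ := hw
  exact ⟨u, Cl_mono h hu, hd.trans h⟩

lemma Mo_eq_of_rel {r : ℕ} {t t' : V} (h : ClRel G K r t t') :
    Mo G K r t = Mo G K r t' := by
  unfold Mo; rw [Cl_eq_of_rel h]

/-- two moats at the same level meeting at a vertex implies the clusters are equal. -/
lemma rel_of_mem_Mo (hG : G.Connected) {r : ℕ} {t t' a : V}
    (ht : t ∈ K) (ht' : t' ∈ K)
    (h1 : a ∈ Mo G K r t) (h2 : a ∈ Mo G K r t') : ClRel G K r t t' := by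
  rw [mem_Mo] at h1 h2
  obtain ⟨u, hu, hdu⟩ := h1
  obtain ⟨u', hu', hdu'⟩ := h2
  have htri : G.dist u u' ≤ G.dist u a + G.dist a u' := hG.dist_triangle
  have hdu2 : G.dist u a = G.dist a u := SimpleGraph.dist_comm ..
  have : 2 * G.dist u u' ≤ 2 * r := by omega
  have huu' : G.dist u u' ≤ r := by omega
  have h3 : ClRel G K r u u' := Relation.ReflTransGen.single
    ⟨(mem_Cl.1 hu).1, (mem_Cl.1 hu').1, huu'⟩
  exact ((mem_Cl.1 hu).2.trans h3).trans (clrel_symm (mem_Cl.1 hu').2)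

lemma TT_spec (hG : G.Connected) : ∀ t ∈ K, ∀ t' ∈ K, ClRel G K (TT G K) t t' := by
  have hmem : (K ×ˢ K).sup (fun p => G.dist p.1 p.2) ∈
      {s : ℕ | ∀ t ∈ K, ∀ t' ∈ K, ClRel G K s t t'} := by
    intro t ht t' ht'
    have hm : ((t, t') : V × V) ∈ K ×ˢ K := Finset.mem_product.2 ⟨ht, ht'⟩
    have hle : G.dist t t' ≤ (K ×ˢ K).sup (fun p => G.dist p.1 p.2) :=
      Finset.le_sup (f := fun p : V × V => G.dist p.1 p.2) hm
    exact Relation.ReflTransGen.single ⟨ht, ht', hle⟩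
  exact Nat.sInf_mem ⟨_, hmem⟩

lemma lt_TT {r : ℕ} (h : r < TT G K) :
    ∃ u ∈ K, ∃ w ∈ K, ¬ ClRel G K r u w := by
  have : r ∉ {s : ℕ | ∀ t ∈ K, ∀ t' ∈ K, ClRel G K s t t'} := Nat.notMem_of_lt_sInf h
  simp only [Set.mem_setOf_eq, not_forall] at this
  obtain ⟨u, hu, w, hw, hn⟩ := this
  exact ⟨u, hu, w, hw, hn⟩

/-- moats at level `r < TT` are valid cuts separating `K`. -/
lemma Mo_cut (hG : G.Connected) {r : ℕ} (hr : r < TT G K) {t : V} (ht : t ∈ K) :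
    IsCut (Mo G K r t) ∧ (K ∩ Mo G K r t).Nonempty ∧ (K \ Mo G K r t).Nonempty := by
  obtain ⟨u, hu, w, hw, hn⟩ := lt_TT hr
  have hsep : ∃ w' ∈ K, ¬ ClRel G K r t w' := by
    by_cases h1 : ClRel G K r t u
    · exact ⟨w, hw, fun h2 => hn ((clrel_symm h1).trans h2)⟩
    · exact ⟨u, hu, h1⟩
  obtain ⟨w', hw', hnw'⟩ := hsep
  have htin : t ∈ Mo G K r t :=
    mem_Mo.2 ⟨t, self_mem_Cl ht, by simp [SimpleGraph.dist_self]⟩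
  have hwout : w' ∉ Mo G K r t := by
    intro hmem
    rw [mem_Mo] at hmem
    obtain ⟨u', hu', hd⟩ := hmem
    have : G.dist u' w' ≤ r := by
      have := SimpleGraph.dist_comm (G := G) (u := w') (v := u'); omega
    exact hnw' ((mem_Cl.1 hu').2.trans
      (Relation.ReflTransGen.single ⟨(mem_Cl.1 hu').1, hw', this⟩))
  refine ⟨⟨⟨t, htin⟩, fun huniv => hwout (huniv ▸ Finset.mem_univ w')⟩,
    ⟨t, Finset.mem_inter.2 ⟨ht, htin⟩⟩, ⟨w', Finset.mem_sdiff.2 ⟨hw', hwout⟩⟩⟩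


lemma crosses_pair {C : Finset V} {a b : V} :
    Crosses C s(a, b) ↔ (a ∈ C ∧ b ∉ C) ∨ (b ∈ C ∧ a ∉ C) := by
  constructor
  · rintro ⟨u, v, he, hu, hv⟩
    rw [Sym2.eq_iff] at he
    rcases he with ⟨rfl, rfl⟩ | ⟨rfl, rfl⟩
    · exact Or.inl ⟨hu, hv⟩
    · exact Or.inr ⟨hu, hv⟩
  · rintro (⟨h1, h2⟩ | ⟨h1, h2⟩)
    · exact ⟨a, b, rfl, h1, h2⟩
    · exact ⟨b, a, Sym2.eq_swap.symm, h1, h2⟩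

lemma dist_adj_le {a b : V} (hadj : G.Adj a b) : G.dist a b ≤ 1 :=
  le_of_eq (SimpleGraph.dist_eq_one_iff_adj.2 hadj)

/-- mixed sides: an `a`-side crossing and a `b`-side crossing force equal levels
(here: the `a`-side level is not less than ... ). -/
lemma sides_not_lt (hG : G.Connected) {a b : V} (hadj : G.Adj a b)
    {r r' : ℕ} {t t' : V} (ht : t ∈ K) (ht' : t' ∈ K)
    (ha : a ∈ Mo G K r t) (hb' : b ∈ Mo G K r' t') (ha' : a ∉ Mo G K r' t') :
    ¬ r < r' := by
  intro hlt
  obtain ⟨u, hu, hdu⟩ := mem_Mo.1 ha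
  obtain ⟨v, hv, hdv⟩ := mem_Mo.1 hb'
  have h1 : G.dist u v ≤ G.dist u a + G.dist a v := hG.dist_triangle
  have h2 : G.dist a v ≤ G.dist a b + G.dist b v := hG.dist_triangle
  have h3 : G.dist a b ≤ 1 := dist_adj_le hadj
  have h4 : G.dist u a = G.dist a u := SimpleGraph.dist_comm ..
  have h5 : G.dist b v = G.dist v b := SimpleGraph.dist_comm ..
  have h6 : G.dist v b = G.dist b v := SimpleGraph.dist_comm ..
  have huv : G.dist u v ≤ r' := by omega
  have hrel : ClRel G K r' u v := Relation.ReflTransGen.single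
    ⟨(mem_Cl.1 hu).1, (mem_Cl.1 hv).1, huv⟩
  have hu' : u ∈ Cl G K r' t' := mem_Cl.2
    ⟨(mem_Cl.1 hu).1, (mem_Cl.1 hv).2.trans (clrel_symm hrel)⟩
  exact ha' (mem_Mo.2 ⟨u, hu', by omega⟩)

/-- same-side crossings at different levels are at consecutive levels. -/
lemma aside_window (hG : G.Connected) {a b : V} (hadj : G.Adj a b)
    {r r' : ℕ} {t t' : V} (ht : t ∈ K) (ht' : t' ∈ K)
    (ha : a ∈ Mo G K r t) (ha' : a ∈ Mo G K r' t') (hb' : b ∉ Mo G K r' t')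
    (hrr : r < r') : r' ≤ r + 1 := by
  obtain ⟨u, hu, hdu⟩ := mem_Mo.1 ha
  have ha2 : a ∈ Mo G K r' t := Mo_mono (le_of_lt hrr) ha
  have hrel : ClRel G K r' t t' := rel_of_mem_Mo hG ht ht' ha2 ha'
  have hu' : u ∈ Cl G K r' t' := by
    rw [← Cl_eq_of_rel hrel]
    exact Cl_mono (le_of_lt hrr) hu
  have hnb : ¬ 2 * G.dist b u ≤ r' := fun hle => hb' (mem_Mo.2 ⟨u, hu', hle⟩)
  have h2 : G.dist b u ≤ G.dist b a + G.dist a u := hG.dist_triangle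
  have h3 : G.dist b a ≤ 1 := dist_adj_le hadj.symm
  omega

/-- covering lemma, one-sided case : all crossings are `a`-side. -/
lemma cover_onesided (hG : G.Connected) {a b : V} (hadj : G.Adj a b)
    (hall : ∀ r < TT G K, ∀ t ∈ K, Crosses (Mo G K r t) s(a, b) →
      a ∈ Mo G K r t ∧ b ∉ Mo G K r t)
    (hex : ∃ r, ∃ t, r < TT G K ∧ t ∈ K ∧ Crosses (Mo G K r t) s(a, b)) :
    ∃ r1 t1 r2 t2, t1 ∈ K ∧ t2 ∈ K ∧
      ∀ r < TT G K, ∀ t ∈ K, Crosses (Mo G K r t) s(a, b) →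
        (r = r1 ∧ ClRel G K r1 t t1) ∨ (r = r2 ∧ ClRel G K r2 t t2) := by
  classical
  set S : Finset (ℕ × V) := (Finset.range (TT G K) ×ˢ K).filter
    (fun p => Crosses (Mo G K p.1 p.2) s(a, b)) with hS
  have hmemS : ∀ {r t}, r < TT G K → t ∈ K → Crosses (Mo G K r t) s(a, b) → (r, t) ∈ S := by
    intro r t h1 h2 h3
    simp only [hS, Finset.mem_filter, Finset.mem_product, Finset.mem_range]
    exact ⟨⟨h1, h2⟩, h3⟩
  have hSne : S.Nonempty := by
    obtain ⟨r, t, h1, h2, h3⟩ := hex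
    exact ⟨(r, t), hmemS h1 h2 h3⟩
  obtain ⟨p0, hp0S, hp0min⟩ := S.exists_min_image (fun p => p.1) hSne
  have hSprop : ∀ p ∈ S, p.1 < TT G K ∧ p.2 ∈ K ∧ Crosses (Mo G K p.1 p.2) s(a, b) := by
    intro p hp
    simp only [hS, Finset.mem_filter, Finset.mem_product, Finset.mem_range] at hp
    exact ⟨hp.1.1, hp.1.2, hp.2⟩
  obtain ⟨hp0T, hp0K, hp0cr⟩ := hSprop p0 hp0S
  obtain ⟨hp0a, hp0b⟩ := hall p0.1 hp0T p0.2 hp0K hp0cr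
  by_cases h2 : ∃ q ∈ S, q.1 = p0.1 + 1
  · obtain ⟨q, hqS, hq1⟩ := h2
    obtain ⟨hqT, hqK, hqcr⟩ := hSprop q hqS
    obtain ⟨hqa, hqb⟩ := hall q.1 hqT q.2 hqK hqcr
    refine ⟨p0.1, p0.2, p0.1 + 1, q.2, hp0K, hqK, ?_⟩
    intro r hr t ht hcr
    obtain ⟨hat, hbt⟩ := hall r hr t ht hcr
    have hge : p0.1 ≤ r := hp0min (r, t) (hmemS hr ht hcr)
    rcases eq_or_lt_of_le hge with heq | hlt
    · exact Or.inl ⟨heq.symm, heq ▸ rel_of_mem_Mo hG ht hp0K hat (heq ▸ hp0a)⟩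
    · have hle : r ≤ p0.1 + 1 := aside_window hG hadj hp0K ht hp0a hat hbt hlt
      have hreq : r = p0.1 + 1 := le_antisymm hle hlt
      refine Or.inr ⟨hreq, ?_⟩
      have hat' : a ∈ Mo G K (p0.1 + 1) t := hreq ▸ hat
      exact rel_of_mem_Mo hG ht hqK hat' (hq1 ▸ hqa)
  · refine ⟨p0.1, p0.2, p0.1, p0.2, hp0K, hp0K, ?_⟩
    intro r hr t ht hcr
    obtain ⟨hat, hbt⟩ := hall r hr t ht hcr
    have hge : p0.1 ≤ r := hp0min (r, t) (hmemS hr ht hcr)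
    rcases eq_or_lt_of_le hge with heq | hlt
    · exact Or.inl ⟨heq.symm, heq ▸ rel_of_mem_Mo hG ht hp0K hat (heq ▸ hp0a)⟩
    · have hle : r ≤ p0.1 + 1 := aside_window hG hadj hp0K ht hp0a hat hbt hlt
      have hreq : r = p0.1 + 1 := le_antisymm hle hlt
      exact absurd ⟨(r, t), hmemS hr ht hcr, hreq⟩ h2

/-- the covering lemma : all crossings of a fixed edge are covered by
at most two (level, cluster) events. -/
lemma cover (hG : G.Connected) (hKne : K.Nonempty) {a b : V} (hadj : G.Adj a b) :
    ∃ r1 t1 r2 t2, t1 ∈ K ∧ t2 ∈ K ∧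
      ∀ r < TT G K, ∀ t ∈ K, Crosses (Mo G K r t) s(a, b) →
        (r = r1 ∧ ClRel G K r1 t t1) ∨ (r = r2 ∧ ClRel G K r2 t t2) := by
  classical
  by_cases hA : ∃ r, ∃ t, r < TT G K ∧ t ∈ K ∧ Crosses (Mo G K r t) s(a, b) ∧
      a ∈ Mo G K r t
  · by_cases hB : ∃ r, ∃ t, r < TT G K ∧ t ∈ K ∧ Crosses (Mo G K r t) s(a, b) ∧
        b ∈ Mo G K r t
    · -- both sides occur : everything is at one single level
      obtain ⟨ra, ta, hraT, htaK, hcra, haa⟩ := hA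
      obtain ⟨rb, tb, hrbT, htbK, hcrb, hbb⟩ := hB
      have hba : b ∉ Mo G K ra ta := by
        rcases crosses_pair.1 hcra with ⟨h1, h2⟩ | ⟨h1, h2⟩
        · exact h2
        · exact absurd haa h2
      have hab : a ∉ Mo G K rb tb := by
        rcases crosses_pair.1 hcrb with ⟨h1, h2⟩ | ⟨h1, h2⟩
        · exact absurd hbb h2
        · exact h2
      have e3 : ¬ ra < rb := sides_not_lt hG hadj htaK htbK haa hbb hab
      have e4 : ¬ rb < ra := sides_not_lt hG hadj.symm htbK htaK hbb haa hba
      refine ⟨ra, ta, rb, tb, htaK, htbK, ?_⟩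
      intro r hr t ht hcr
      rcases crosses_pair.1 hcr with ⟨hat, hbt⟩ | ⟨hbt, hat⟩
      · -- a-side event : its level equals rb = ra
        have e1 : ¬ r < rb := sides_not_lt hG hadj ht htbK hat hbb hab
        have e2 : ¬ rb < r := sides_not_lt hG hadj.symm htbK ht hbb hat hbt
        have hre : r = ra := by omega
        exact Or.inl ⟨hre, rel_of_mem_Mo hG ht htaK (hre ▸ hat) haa⟩
      · -- b-side event : its level equals ra = rb
        have e1 : ¬ ra < r := sides_not_lt hG hadj htaK ht haa hbt hat
        have e2 : ¬ r < ra := sides_not_lt hG hadj.symm ht htaK hbt haa hba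
        have hre : r = rb := by omega
        exact Or.inr ⟨hre, rel_of_mem_Mo hG ht htbK (hre ▸ hbt) hbb⟩
    · -- only a-side events
      apply cover_onesided hG hadj
      · intro r hr t ht hcr
        rcases crosses_pair.1 hcr with ⟨h1, h2⟩ | ⟨h1, h2⟩
        · exact ⟨h1, h2⟩
        · exact absurd ⟨r, t, hr, ht, hcr, h1⟩ hB
      · obtain ⟨r, t, h1, h2, h3, _⟩ := hA
        exact ⟨r, t, h1, h2, h3⟩
  · by_cases hB : ∃ r, ∃ t, r < TT G K ∧ t ∈ K ∧ Crosses (Mo G K r t) s(a, b) ∧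
        b ∈ Mo G K r t
    · -- only b-side events : apply the one-sided lemma with a,b swapped
      have hswap : s(b, a) = s(a, b) := Sym2.eq_swap
      have := cover_onesided (K := K) hG hadj.symm (a := b) (b := a) ?_ ?_
      · obtain ⟨r1, t1, r2, t2, h1, h2, h3⟩ := this
        refine ⟨r1, t1, r2, t2, h1, h2, ?_⟩
        intro r hr t ht hcr
        exact h3 r hr t ht (hswap ▸ hcr)
      · intro r hr t ht hcr
        rw [hswap] at hcr
        rcases crosses_pair.1 hcr with ⟨h1, h2⟩ | ⟨h1, h2⟩
        · exact absurd ⟨r, t, hr, ht, hcr, h1⟩ hA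
        · exact ⟨h1, h2⟩
      · obtain ⟨r, t, h1, h2, h3, _⟩ := hB
        exact ⟨r, t, h1, h2, hswap ▸ h3⟩
    · -- no events at all
      obtain ⟨t0, ht0⟩ := hKne
      refine ⟨0, t0, 0, t0, ht0, ht0, ?_⟩
      intro r hr t ht hcr
      rcases crosses_pair.1 hcr with ⟨h1, h2⟩ | ⟨h1, h2⟩
      · exact absurd ⟨r, t, hr, ht, hcr, h1⟩ hA
      · exact absurd ⟨r, t, hr, ht, hcr, h1⟩ hB


lemma fiber_eq {r : ℕ} {t : V} (ht : t ∈ K) :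
    K.filter (fun t' => Cl G K r t' = Cl G K r t) = Cl G K r t := by
  ext u
  simp only [Finset.mem_filter, mem_Cl]
  constructor
  · rintro ⟨hu, he⟩
    have : u ∈ Cl G K r u := self_mem_Cl hu
    rw [he, mem_Cl] at this
    exact ⟨hu, this.2⟩
  · rintro ⟨hu, hrel⟩
    exact ⟨hu, (Cl_eq_of_rel hrel).symm⟩

lemma sum_inv_card (r : ℕ) :
    ∑ t ∈ K, (1 : ℝ) / (Cl G K r t).card = (cc G K r : ℝ) := by
  have h1 : ∑ _S ∈ K.image (Cl G K r), (1 : ℝ) = ((K.image (Cl G K r)).card : ℝ) := by simp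
  rw [cc, ← h1]
  refine (Finset.sum_image' _ ?_).symm
  · intro t ht
    have hfib : (K.filter fun t' => Cl G K r t' = Cl G K r t) = Cl G K r t := fiber_eq ht
    rw [hfib]
    have hcongr : ∀ u ∈ Cl G K r t, (1 : ℝ) / (Cl G K r u).card
        = (1 : ℝ) / (Cl G K r t).card := by
      intro u hu
      rw [Cl_eq_of_rel (mem_Cl.1 hu).2]
    rw [Finset.sum_congr rfl hcongr, Finset.sum_const]
    have hpos : 0 < (Cl G K r t).card := Finset.card_pos.2 ⟨t, self_mem_Cl ht⟩
    have : ((Cl G K r t).card : ℝ) ≠ 0 := by positivity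
    rw [nsmul_eq_mul]
    field_simp

lemma rel_filter_eq {r : ℕ} {t1 : V} (ht1 : t1 ∈ K) :
    K.filter (fun t => ClRel G K r t t1) = Cl G K r t1 := by
  ext u
  simp only [Finset.mem_filter, mem_Cl]
  exact ⟨fun ⟨h1, h2⟩ => ⟨h1, clrel_symm h2⟩, fun ⟨h1, h2⟩ => ⟨h1, clrel_symm h2⟩⟩

lemma cover_sum_le {r1 : ℕ} {t1 : V} (ht1 : t1 ∈ K) :
    ∑ r ∈ Finset.range (TT G K), ∑ t ∈ K,
      (if r = r1 ∧ ClRel G K r1 t t1 then (1 : ℝ) / (Cl G K r1 t1).card else 0) ≤ 1 := by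
  have hcard : 0 < (Cl G K r1 t1).card := Finset.card_pos.2 ⟨t1, self_mem_Cl ht1⟩
  have hinner : ∀ r, ∑ t ∈ K,
      (if r = r1 ∧ ClRel G K r1 t t1 then (1 : ℝ) / (Cl G K r1 t1).card else 0)
      = if r = r1 then 1 else 0 := by
    intro r
    by_cases hr : r = r1
    · simp only [hr, true_and, if_true]
      rw [← Finset.sum_filter, rel_filter_eq ht1, Finset.sum_const, nsmul_eq_mul]
      have : ((Cl G K r1 t1).card : ℝ) ≠ 0 := by positivity
      field_simp
    · simp [hr]
  rw [Finset.sum_congr rfl (fun r _ => hinner r), Finset.sum_ite_eq' (Finset.range (TT G K))]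
  split <;> norm_num


lemma packing (hG : G.Connected) (hKne : K.Nonempty) {a b : V} (hadj : G.Adj a b) :
    ∑ r ∈ Finset.range (TT G K), ∑ t ∈ K,
      (if Crosses (Mo G K r t) s(a, b) then (1 : ℝ) / (Cl G K r t).card else 0) ≤ 2 := by
  obtain ⟨r1, t1, r2, t2, ht1, ht2, hcov⟩ := cover hG hKne hadj
  have hstep : ∑ r ∈ Finset.range (TT G K), ∑ t ∈ K,
      (if Crosses (Mo G K r t) s(a, b) then (1 : ℝ) / (Cl G K r t).card else 0)
      ≤ (∑ r ∈ Finset.range (TT G K), ∑ t ∈ K,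
          (if r = r1 ∧ ClRel G K r1 t t1 then (1 : ℝ) / (Cl G K r1 t1).card else 0))
        + ∑ r ∈ Finset.range (TT G K), ∑ t ∈ K,
          (if r = r2 ∧ ClRel G K r2 t t2 then (1 : ℝ) / (Cl G K r2 t2).card else 0) := by
    rw [← Finset.sum_add_distrib]
    refine Finset.sum_le_sum ?_
    intro r hr
    rw [← Finset.sum_add_distrib]
    refine Finset.sum_le_sum ?_
    intro t ht
    by_cases hcr : Crosses (Mo G K r t) s(a, b)
    · rcases hcov r (Finset.mem_range.1 hr) t ht hcr with ⟨hre, hrel⟩ | ⟨hre, hrel⟩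
      · have hcl : Cl G K r t = Cl G K r1 t1 := by rw [hre]; exact Cl_eq_of_rel hrel
        have e1 : (if Crosses (Mo G K r t) s(a, b) then (1 : ℝ) / (Cl G K r t).card else 0)
            = (1 : ℝ) / (Cl G K r1 t1).card := by rw [if_pos hcr, hcl]
        have e2 : (if r = r1 ∧ ClRel G K r1 t t1 then (1 : ℝ) / (Cl G K r1 t1).card else 0)
            = (1 : ℝ) / (Cl G K r1 t1).card := if_pos ⟨hre, hrel⟩
        have e3 : (0:ℝ) ≤ if r = r2 ∧ ClRel G K r2 t t2
            then (1 : ℝ) / (Cl G K r2 t2).card else 0 := by positivity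
        rw [e1, e2]
        linarith
      · have hcl : Cl G K r t = Cl G K r2 t2 := by rw [hre]; exact Cl_eq_of_rel hrel
        have e1 : (if Crosses (Mo G K r t) s(a, b) then (1 : ℝ) / (Cl G K r t).card else 0)
            = (1 : ℝ) / (Cl G K r2 t2).card := by rw [if_pos hcr, hcl]
        have e2 : (if r = r2 ∧ ClRel G K r2 t t2 then (1 : ℝ) / (Cl G K r2 t2).card else 0)
            = (1 : ℝ) / (Cl G K r2 t2).card := if_pos ⟨hre, hrel⟩
        have e3 : (0:ℝ) ≤ if r = r1 ∧ ClRel G K r1 t t1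
            then (1 : ℝ) / (Cl G K r1 t1).card else 0 := by positivity
        rw [e1, e2]
        linarith
    · simp only [hcr, if_false]
      positivity
  have h1 := cover_sum_le (G := G) (r1 := r1) ht1
  have h2 := cover_sum_le (G := G) (r1 := r2) ht2
  linarith

lemma dual_bound (hG : G.Connected) (hK2 : 2 ≤ K.card) (x : Sym2 V → ℝ)
    (hx0 : ∀ e, 0 ≤ x e)
    (hfeas : ∀ C : Finset V, IsCut C → (K ∩ C).Nonempty → (K \ C).Nonempty →
      1 ≤ ∑ e ∈ cutEdges G C, x e) :
    (∑ r ∈ Finset.range (TT G K), (cc G K r : ℝ)) ≤ 2 * ∑ e ∈ G.edgeFinset, x e := by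
  have hKne : K.Nonempty := Finset.card_pos.1 (by omega)
  calc ∑ r ∈ Finset.range (TT G K), (cc G K r : ℝ)
      = ∑ r ∈ Finset.range (TT G K), ∑ t ∈ K, (1 : ℝ) / (Cl G K r t).card :=
        Finset.sum_congr rfl (fun r _ => (sum_inv_card r).symm)
    _ ≤ ∑ r ∈ Finset.range (TT G K), ∑ t ∈ K,
        ((1 : ℝ) / (Cl G K r t).card) * ∑ e ∈ cutEdges G (Mo G K r t), x e := by
        refine Finset.sum_le_sum fun r hr => Finset.sum_le_sum fun t ht => ?_
        have hcut := Mo_cut hG (Finset.mem_range.1 hr) ht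
        have hfe := hfeas _ hcut.1 hcut.2.1 hcut.2.2
        have hnn : (0:ℝ) ≤ (1 : ℝ) / (Cl G K r t).card := by positivity
        nlinarith
    _ = ∑ r ∈ Finset.range (TT G K), ∑ t ∈ K, ∑ e ∈ G.edgeFinset,
        (if Crosses (Mo G K r t) e then ((1 : ℝ) / (Cl G K r t).card) * x e else 0) := by
        refine Finset.sum_congr rfl fun r _ => Finset.sum_congr rfl fun t _ => ?_
        rw [cutEdges, Finset.mul_sum, Finset.sum_filter]
    _ = ∑ e ∈ G.edgeFinset, ∑ r ∈ Finset.range (TT G K), ∑ t ∈ K,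
        (if Crosses (Mo G K r t) e then ((1 : ℝ) / (Cl G K r t).card) * x e else 0) := by
        have h1 : ∑ r ∈ Finset.range (TT G K), ∑ t ∈ K, ∑ e ∈ G.edgeFinset,
            (if Crosses (Mo G K r t) e then ((1 : ℝ) / (Cl G K r t).card) * x e else 0)
            = ∑ r ∈ Finset.range (TT G K), ∑ e ∈ G.edgeFinset, ∑ t ∈ K,
            (if Crosses (Mo G K r t) e then ((1 : ℝ) / (Cl G K r t).card) * x e else 0) :=
          Finset.sum_congr rfl (fun r _ => Finset.sum_comm)
        rw [h1]
        exact Finset.sum_comm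
    _ ≤ ∑ e ∈ G.edgeFinset, 2 * x e := by
        refine Finset.sum_le_sum fun e he => ?_
        induction e using Sym2.ind with
        | _ a b =>
          have hadj : G.Adj a b := G.mem_edgeSet.1 (SimpleGraph.mem_edgeFinset.1 he)
          have hpack := packing hG hKne hadj
          have hfact : ∀ r t, (if Crosses (Mo G K r t) s(a, b)
              then ((1 : ℝ) / (Cl G K r t).card) * x s(a, b) else 0)
              = (if Crosses (Mo G K r t) s(a, b)
                then ((1 : ℝ) / (Cl G K r t).card) else 0) * x s(a, b) := by
            intro r t
            split <;> simp
          calc ∑ r ∈ Finset.range (TT G K), ∑ t ∈ K,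
              (if Crosses (Mo G K r t) s(a, b)
                then ((1 : ℝ) / (Cl G K r t).card) * x s(a, b) else 0)
              = (∑ r ∈ Finset.range (TT G K), ∑ t ∈ K,
                (if Crosses (Mo G K r t) s(a, b)
                  then ((1 : ℝ) / (Cl G K r t).card) else 0)) * x s(a, b) := by
                rw [Finset.sum_mul]
                refine Finset.sum_congr rfl fun r _ => ?_
                rw [Finset.sum_mul]
                exact Finset.sum_congr rfl fun t _ => hfact r t
            _ ≤ 2 * x s(a, b) := mul_le_mul_of_nonneg_right hpack (hx0 _)
    _ = 2 * ∑ e ∈ G.edgeFinset, x e := by rw [Finset.mul_sum]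


/-- connectivity via a set of chosen pairs. -/
def pconn (P : Finset (V × V)) : V → V → Prop :=
  Relation.ReflTransGen (fun a b => (a, b) ∈ P ∨ (b, a) ∈ P)

noncomputable def comp (K : Finset V) (P : Finset (V × V)) (t : V) : Finset V :=
  K.filter (fun u => pconn P t u)

noncomputable def NP (K : Finset V) (P : Finset (V × V)) : ℕ := (K.image (comp K P)).card

noncomputable def costP (G : SimpleGraph V) (P : Finset (V × V)) : ℕ :=
  ∑ p ∈ P, G.dist p.1 p.2

variable (G K) in
/-- all pairs are between terminals at distance at most `r`. -/
def pairsGood (r : ℕ) (P : Finset (V × V)) : Prop :=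
  ∀ p ∈ P, p.1 ∈ K ∧ p.2 ∈ K ∧ G.dist p.1 p.2 ≤ r

lemma pconn_symm {P : Finset (V × V)} : Symmetric (pconn P) :=
  fun a b hab => (@Relation.ReflTransGen.stdSymm _ _ ⟨fun a b h => h.symm⟩).symm a b hab

lemma pconn_mono {P P' : Finset (V × V)} (h : P ⊆ P') {a b : V}
    (hab : pconn P a b) : pconn P' a b :=
  Relation.ReflTransGen.mono (fun a b hab => hab.imp (@h _) (@h _)) _ _ hab

lemma mem_comp {P : Finset (V × V)} {t u : V} :
    u ∈ comp K P t ↔ u ∈ K ∧ pconn P t u := by simp [comp]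

lemma self_mem_comp {P : Finset (V × V)} {t : V} (ht : t ∈ K) : t ∈ comp K P t :=
  mem_comp.2 ⟨ht, Relation.ReflTransGen.refl⟩

lemma comp_eq_of_pconn {P : Finset (V × V)} {t t' : V} (h : pconn P t t') :
    comp K P t = comp K P t' := by
  ext u
  simp only [mem_comp, and_congr_right_iff]
  exact fun _ => ⟨fun h2 => (pconn_symm h).trans h2, fun h2 => h.trans h2⟩

lemma pconn_of_clrel_imp {P : Finset (V × V)} {r : ℕ}
    (hst : ∀ x y, bse G K r x y → pconn P x y) {t t' : V}
    (h : ClRel G K r t t') : pconn P t t' := by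
  induction h with
  | refl => exact Relation.ReflTransGen.refl
  | tail hstep hb ih => exact ih.trans (hst _ _ hb)

lemma clrel_of_pconn {P : Finset (V × V)} {r : ℕ} (hP : pairsGood G K r P)
    {t t' : V} (h : pconn P t t') : ClRel G K r t t' := by
  refine Relation.ReflTransGen.mono ?_ _ _ h
  intro x y hxy
  rcases hxy with hm | hm
  · exact ⟨(hP _ hm).1, (hP _ hm).2.1, (hP _ hm).2.2⟩
  · obtain ⟨h1, h2, h3⟩ := hP _ hm
    exact ⟨h2, h1, by rwa [SimpleGraph.dist_comm]⟩

/-- number of classes at level `r+1` is at most the number of `P`-components. -/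
lemma cc_le_NP {P : Finset (V × V)} {r : ℕ} (hP : pairsGood G K r P) :
    cc G K r ≤ NP K P := by
  have hpt : ∀ t ∈ K, Cl G K r t =
      K.filter (fun u => ∃ t' ∈ comp K P t, ClRel G K r t' u) := by
    intro t ht
    ext u
    simp only [mem_Cl, Finset.mem_filter]
    constructor
    · rintro ⟨hu, hrel⟩
      exact ⟨hu, t, self_mem_comp ht, hrel⟩
    · rintro ⟨hu, t', ht', hrel⟩
      have h1 : ClRel G K r t t' := clrel_of_pconn hP (mem_comp.1 ht').2
      exact ⟨hu, h1.trans hrel⟩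
  have himg : K.image (Cl G K r) = (K.image (comp K P)).image
      (fun S => K.filter (fun u => ∃ t' ∈ S, ClRel G K r t' u)) := by
    rw [Finset.image_image]
    exact Finset.image_congr (fun t ht => hpt t ht)
  rw [cc, NP, himg]
  exact Finset.card_image_le

/-- the number of `P`-components is at most the number of classes at level `r`,
provided `P` connects each class at level `r`. -/
lemma NP_le_cc {P : Finset (V × V)} {r : ℕ}
    (hconn : ∀ t ∈ K, ∀ t' ∈ K, ClRel G K r t t' → pconn P t t') :
    NP K P ≤ cc G K r := by
  have hpt : ∀ t ∈ K, comp K P t =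
      K.filter (fun u => ∃ t' ∈ Cl G K r t, pconn P t' u) := by
    intro t ht
    ext u
    simp only [mem_comp, Finset.mem_filter]
    constructor
    · rintro ⟨hu, hrel⟩
      exact ⟨hu, t, self_mem_Cl ht, hrel⟩
    · rintro ⟨hu, t', ht', hrel⟩
      have h1 : pconn P t t' := hconn t ht t' (Cl_subset_K ht') (mem_Cl.1 ht').2
      exact ⟨hu, h1.trans hrel⟩
  have himg : K.image (comp K P) = (K.image (Cl G K r)).image
      (fun S => K.filter (fun u => ∃ t' ∈ S, pconn P t' u)) := by
    rw [Finset.image_image]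
    exact Finset.image_congr (fun t ht => hpt t ht)
  rw [cc, NP, himg]
  exact Finset.card_image_le

/-- adding a pair joining two different components strictly decreases
the number of components. -/
lemma NP_lt {P : Finset (V × V)} {a b : V} (ha : a ∈ K) (hb : b ∈ K)
    (hnp : ¬ pconn P a b) :
    NP K (insert (a, b) P) < NP K P := by
  set P' := insert (a, b) P with hP'
  have hsub : P ⊆ P' := Finset.subset_insert _ _
  have hpt : ∀ t ∈ K, comp K P' t =
      K.filter (fun u => ∃ t' ∈ comp K P t, pconn P' t' u) := by
    intro t ht
    ext u
    simp only [mem_comp, Finset.mem_filter]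
    constructor
    · rintro ⟨hu, hrel⟩
      exact ⟨hu, t, ⟨ht, Relation.ReflTransGen.refl⟩, hrel⟩
    · rintro ⟨hu, t', ht', hrel⟩
      exact ⟨hu, (pconn_mono hsub ht'.2).trans hrel⟩
  have himg : K.image (comp K P') = (K.image (comp K P)).image
      (fun S => K.filter (fun u => ∃ t' ∈ S, pconn P' t' u)) := by
    rw [Finset.image_image]
    exact Finset.image_congr (fun t ht => hpt t ht)
  have hle : NP K P' ≤ NP K P := by
    rw [NP, NP, himg]; exact Finset.card_image_le
  rcases lt_or_eq_of_le hle with h | h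
  · exact h
  · exfalso
    rw [NP, NP, himg] at h
    have hinj := Finset.card_image_iff.1 h
    have hmema : comp K P a ∈ K.image (comp K P) := Finset.mem_image_of_mem _ ha
    have hmemb : comp K P b ∈ K.image (comp K P) := Finset.mem_image_of_mem _ hb
    have hpab : pconn P' a b :=
      Relation.ReflTransGen.single (Or.inl (Finset.mem_insert_self _ _))
    have hfeq : K.filter (fun u => ∃ t' ∈ comp K P a, pconn P' t' u)
        = K.filter (fun u => ∃ t' ∈ comp K P b, pconn P' t' u) := by
      rw [← hpt a ha, ← hpt b hb]
      exact comp_eq_of_pconn hpab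
    have := hinj hmema hmemb hfeq
    have hba : b ∈ comp K P b := self_mem_comp hb
    rw [← this] at hba
    exact hnp (mem_comp.1 hba).2

lemma exists_new_pair {P : Finset (V × V)} {r : ℕ}
    (hfail : ∃ t ∈ K, ∃ t' ∈ K, ClRel G K r t t' ∧ ¬ pconn P t t') :
    ∃ x y, bse G K r x y ∧ ¬ pconn P x y := by
  by_contra h
  push_neg at h
  obtain ⟨t, ht, t', ht', hrel, hnp⟩ := hfail
  exact hnp (pconn_of_clrel_imp (fun x y hxy => h x y hxy) hrel)

lemma step_extend {r : ℕ} : ∀ n (P : Finset (V × V)), NP K P = n →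
    pairsGood G K (r + 1) P →
    ∃ Q, pairsGood G K (r + 1) Q ∧
      costP G Q + (r + 1) * cc G K (r + 1) ≤ costP G P + (r + 1) * NP K P ∧
      (∀ t ∈ K, ∀ t' ∈ K, ClRel G K (r + 1) t t' → pconn Q t t') := by
  intro n
  induction n using Nat.strong_induction_on with
  | _ n IH =>
    intro P hn hgood
    by_cases hc : ∀ t ∈ K, ∀ t' ∈ K, ClRel G K (r + 1) t t' → pconn P t t'
    · refine ⟨P, hgood, ?_, hc⟩
      have h1 : cc G K (r + 1) ≤ NP K P := cc_le_NP hgood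
      have := Nat.mul_le_mul_left (r + 1) h1
      omega
    · push_neg at hc
      obtain ⟨x, y, hbse, hnp⟩ := exists_new_pair hc
      obtain ⟨hx, hy, hd⟩ := hbse
      have hnotmem : (x, y) ∉ P := fun hmem =>
        hnp (Relation.ReflTransGen.single (Or.inl hmem))
      set P' := insert (x, y) P with hP'
      have hgood' : pairsGood G K (r + 1) P' := by
        intro p hp
        rcases Finset.mem_insert.1 hp with rfl | hp2
        · exact ⟨hx, hy, hd⟩
        · exact hgood p hp2
      have hlt : NP K P' < n := hn ▸ NP_lt hx hy hnp
      obtain ⟨Q, hQgood, hQcost, hQconn⟩ := IH (NP K P') hlt P' rfl hgood'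
      refine ⟨Q, hQgood, ?_, hQconn⟩
      have hcostP' : costP G P' = G.dist x y + costP G P := Finset.sum_insert hnotmem
      have h2 : (r + 1) * (NP K P' + 1) ≤ (r + 1) * NP K P :=
        Nat.mul_le_mul_left _ (Nat.succ_le_of_lt (hn ▸ hlt))
      have h3 : (r + 1) * (NP K P' + 1) = (r + 1) * NP K P' + (r + 1) := by ring
      omega

lemma clrel_zero (hG : G.Connected) {t t' : V} (h : ClRel G K 0 t t') : t = t' := by
  induction h with
  | refl => rfl
  | tail hstep hb ih =>
    obtain ⟨h1, h2, h3⟩ := hb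
    have : G.dist _ _ = 0 := Nat.le_zero.1 h3
    rw [← hG.dist_eq_zero_iff.1 this]
    exact ih

lemma levels (hG : G.Connected) (r : ℕ) :
    ∃ P, pairsGood G K r P ∧
      (∀ t ∈ K, ∀ t' ∈ K, ClRel G K r t t' → pconn P t t') ∧
      costP G P + r * cc G K r ≤ ∑ j ∈ Finset.range r, cc G K j := by
  induction r with
  | zero =>
    refine ⟨∅, ?_, ?_, ?_⟩
    · intro p hp; exact absurd hp (Finset.notMem_empty p)
    · intro t ht t' ht' hrel
      rw [clrel_zero hG hrel]
      exact Relation.ReflTransGen.refl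
    · simp [costP]
  | succ r ih =>
    obtain ⟨P, hgood, hconn, hcost⟩ := ih
    have hgood' : pairsGood G K (r + 1) P := by
      intro p hp
      obtain ⟨h1, h2, h3⟩ := hgood p hp
      exact ⟨h1, h2, h3.trans (Nat.le_succ r)⟩
    obtain ⟨Q, hQgood, hQcost, hQconn⟩ := step_extend (NP K P) P rfl hgood'
    refine ⟨Q, hQgood, hQconn, ?_⟩
    have h1 : NP K P ≤ cc G K r := NP_le_cc hconn
    have h2 : (r + 1) * NP K P ≤ (r + 1) * cc G K r := Nat.mul_le_mul_left _ h1
    have h3 : (r + 1) * cc G K r = r * cc G K r + cc G K r := by ring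
    rw [Finset.sum_range_succ]
    omega

lemma mem_verts_finsetSup {α : Type*} [DecidableEq α] {s : Finset α} {f : α → G.Subgraph}
    {x : V} : x ∈ (s.sup f).verts ↔ ∃ a ∈ s, x ∈ (f a).verts := by
  induction s using Finset.induction_on with
  | empty => simp
  | insert _ _ hni ih =>
    rw [Finset.sup_insert, SimpleGraph.Subgraph.verts_sup]
    simp only [Set.mem_union, ih, Finset.mem_insert]
    constructor
    · rintro (h | ⟨a, ha, hx⟩)
      · exact ⟨_, Or.inl rfl, h⟩
      · exact ⟨a, Or.inr ha, hx⟩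
    · rintro ⟨a, rfl | ha, hx⟩
      · exact Or.inl hx
      · exact Or.inr ⟨a, ha, hx⟩

lemma ncard_edgeSet_finsetSup_le {α : Type*} [DecidableEq α] {s : Finset α}
    {f : α → G.Subgraph} {g : α → ℕ} (hg : ∀ a ∈ s, (f a).edgeSet.ncard ≤ g a) :
    (s.sup f).edgeSet.ncard ≤ ∑ a ∈ s, g a := by
  induction s using Finset.induction_on with
  | empty => simp
  | insert _ _ hni ih =>
    rename_i a s'
    rw [Finset.sup_insert, Finset.sum_insert hni]
    calc ((f a ⊔ s'.sup f).edgeSet).ncard = ((f a).edgeSet ∪ (s'.sup f).edgeSet).ncard := by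
          rw [SimpleGraph.Subgraph.edgeSet_sup]
      _ ≤ (f a).edgeSet.ncard + (s'.sup f).edgeSet.ncard := Set.ncard_union_le _ _
      _ ≤ g a + ∑ b ∈ s', g b := by
          gcongr
          · exact hg a (Finset.mem_insert_self a s')
          · exact ih (fun b hb => hg b (Finset.mem_insert_of_mem hb))

lemma exists_steiner_subgraph (hG : G.Connected) (hK2 : 2 ≤ K.card)
    {P : Finset (V × V)} (hPK : ∀ p ∈ P, p.1 ∈ K ∧ p.2 ∈ K)
    (hconn : ∀ t ∈ K, ∀ t' ∈ K, pconn P t t') :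
    ∃ H : G.Subgraph, H.Connected ∧ ↑K ⊆ H.verts ∧ H.edgeSet.ncard ≤ costP G P := by
  classical
  have hwalk : ∀ p : V × V, ∃ w : G.Walk p.1 p.2, w.length = G.dist p.1 p.2 :=
    fun p => hG.exists_walk_length_eq_dist p.1 p.2
  set wk : ∀ p : V × V, G.Walk p.1 p.2 := fun p => (hwalk p).choose with hwk0
  have hwklen : ∀ p, (wk p).length = G.dist p.1 p.2 := fun p => (hwalk p).choose_spec
  set H : G.Subgraph := P.sup (fun p => (wk p).toSubgraph) with hH
  have hle : ∀ p ∈ P, (wk p).toSubgraph ≤ H :=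
    fun p hp => Finset.le_sup (f := fun p => (wk p).toSubgraph) hp
  -- K is contained in the vertices
  have hKsub : ↑K ⊆ H.verts := by
    intro t ht
    obtain ⟨t', ht', hne⟩ := Finset.exists_mem_ne
      (show 1 < K.card by omega) t
    have hp := hconn t ht t' ht'
    rcases Relation.ReflTransGen.cases_head hp with heq | ⟨c, hstep, _⟩
    · exact absurd heq (Ne.symm hne)
    · rcases hstep with hm | hm
      · exact mem_verts_finsetSup.2 ⟨(t, c), hm,
          SimpleGraph.Walk.start_mem_verts_toSubgraph _⟩
      · exact mem_verts_finsetSup.2 ⟨(c, t), hm,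
          SimpleGraph.Walk.end_mem_verts_toSubgraph _⟩
  -- reachability within `H` between vertices of a used walk
  have hwreach : ∀ p ∈ P, ∀ x y (hx : x ∈ (wk p).toSubgraph.verts)
      (hy : y ∈ (wk p).toSubgraph.verts) (hx' : x ∈ H.verts) (hy' : y ∈ H.verts),
      H.coe.Reachable ⟨x, hx'⟩ ⟨y, hy'⟩ := by
    intro p hp x y hx hy hx' hy'
    have h1 := (wk p).toSubgraph_connected ⟨x, hx⟩ ⟨y, hy⟩
    have h2 := SimpleGraph.Reachable.map (SimpleGraph.Subgraph.inclusion (hle p hp)) h1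
    exact h2
  -- reachability between pconn-related terminals
  have key : ∀ {t t' : V}, pconn P t t' → ∀ (ht : t ∈ H.verts) (ht' : t' ∈ H.verts),
      H.coe.Reachable ⟨t, ht⟩ ⟨t', ht'⟩ := by
    intro t t' hp
    induction hp with
    | refl => intro ht ht'; rfl
    | tail hpre hstep ih =>
      rename_i b c
      intro ht hc
      have hbH : b ∈ H.verts := by
        rcases hstep with hm | hm
        · exact mem_verts_finsetSup.2 ⟨(b, c), hm,
            SimpleGraph.Walk.start_mem_verts_toSubgraph _⟩
        · exact mem_verts_finsetSup.2 ⟨(c, b), hm,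
            SimpleGraph.Walk.end_mem_verts_toSubgraph _⟩
      refine (ih ht hbH).trans ?_
      rcases hstep with hm | hm
      · exact hwreach (b, c) hm b c (SimpleGraph.Walk.start_mem_verts_toSubgraph _)
          (SimpleGraph.Walk.end_mem_verts_toSubgraph _) hbH hc
      · exact hwreach (c, b) hm b c (SimpleGraph.Walk.end_mem_verts_toSubgraph _)
          (SimpleGraph.Walk.start_mem_verts_toSubgraph _) hbH hc
  -- H is connected
  have hHconn : H.Connected := by
    rw [SimpleGraph.Subgraph.connected_iff]
    constructor
    · constructor
      rintro ⟨u, hu⟩ ⟨v, hv⟩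
      obtain ⟨pu, hpu, hxu⟩ := mem_verts_finsetSup.1 hu
      obtain ⟨pv, hpv, hxv⟩ := mem_verts_finsetSup.1 hv
      have hu1K : pu.1 ∈ K := (hPK pu hpu).1
      have hv1K : pv.1 ∈ K := (hPK pv hpv).1
      have hu1H : pu.1 ∈ H.verts := hKsub hu1K
      have hv1H : pv.1 ∈ H.verts := hKsub hv1K
      refine (hwreach pu hpu u pu.1 hxu (SimpleGraph.Walk.start_mem_verts_toSubgraph _)
        hu hu1H).trans ?_
      refine (key (hconn pu.1 hu1K pv.1 hv1K) hu1H hv1H).trans ?_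
      exact hwreach pv hpv pv.1 v (SimpleGraph.Walk.start_mem_verts_toSubgraph _) hxv hv1H hv
    · obtain ⟨t, ht⟩ := Finset.card_pos.1 (by omega : 0 < K.card)
      exact ⟨t, hKsub ht⟩
  -- edge counting
  have hcount : H.edgeSet.ncard ≤ costP G P := by
    rw [costP]
    refine ncard_edgeSet_finsetSup_le ?_
    intro p hp
    have h1 : (wk p).toSubgraph.edgeSet = ↑(wk p).edges.toFinset := by
      rw [SimpleGraph.Walk.edgeSet_toSubgraph]
      ext e
      simp
    rw [h1, Set.ncard_coe_finset]
    calc (wk p).edges.toFinset.card ≤ (wk p).edges.length := (wk p).edges.toFinset_card_le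
      _ = (wk p).length := (wk p).length_edges
      _ = G.dist p.1 p.2 := hwklen p
  exact ⟨H, hHconn, hKsub, hcount⟩

lemma exists_good_subgraph (hG : G.Connected) (hK2 : 2 ≤ K.card) :
    ∃ H : G.Subgraph, H.Connected ∧ ↑K ⊆ H.verts ∧
      H.edgeSet.ncard ≤ ∑ j ∈ Finset.range (TT G K), cc G K j := by
  obtain ⟨P, hgood, hconn, hcost⟩ := levels (K := K) hG (TT G K)
  have hconn' : ∀ t ∈ K, ∀ t' ∈ K, pconn P t t' :=
    fun t ht t' ht' => hconn t ht t' ht' (TT_spec hG t ht t' ht')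
  have hPK : ∀ p ∈ P, p.1 ∈ K ∧ p.2 ∈ K := fun p hp => ⟨(hgood p hp).1, (hgood p hp).2.1⟩
  obtain ⟨H, h1, h2, h3⟩ := exists_steiner_subgraph hG hK2 hPK hconn'
  exact ⟨H, h1, h2, h3.trans (by omega)⟩

lemma walk_cross {W : Type*} {G' : SimpleGraph W} {p : W → Prop} :
    ∀ {a b : W}, G'.Walk a b → p a → ¬ p b → ∃ u v, G'.Adj u v ∧ p u ∧ ¬ p v := by
  intro a b w
  induction w with
  | nil => intro h1 h2; exact absurd h1 h2
  | cons h w' ih =>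
    rename_i u v _
    intro h1 h2
    by_cases hc : p v
    · exact ih hc h2
    · exact ⟨u, v, h, h1, hc⟩

lemma feasible_of_subgraph (hG : G.Connected) {H : G.Subgraph} (hHc : H.Connected)
    (hsub : ↑K ⊆ H.verts) :
    (∀ e, 0 ≤ (if e ∈ H.edgeSet then (1 : ℝ) else 0)) ∧
    (∀ C : Finset V, IsCut C → (K ∩ C).Nonempty → (K \ C).Nonempty →
      1 ≤ ∑ e ∈ cutEdges G C, (if e ∈ H.edgeSet then (1 : ℝ) else 0)) ∧
    (∑ e ∈ G.edgeFinset, (if e ∈ H.edgeSet then (1 : ℝ) else 0)) = H.edgeSet.ncard := by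
  refine ⟨fun e => by positivity, ?_, ?_⟩
  · intro C hcut h1 h2
    obtain ⟨t1, ht1⟩ := h1
    obtain ⟨t2, ht2⟩ := h2
    rw [Finset.mem_inter] at ht1
    rw [Finset.mem_sdiff] at ht2
    have ht1H : t1 ∈ H.verts := hsub ht1.1
    have ht2H : t2 ∈ H.verts := hsub ht2.1
    obtain ⟨w⟩ := hHc ⟨t1, ht1H⟩ ⟨t2, ht2H⟩
    obtain ⟨u, v, hadj, hu, hv⟩ := walk_cross (p := fun z : H.verts => (z : V) ∈ C)
      w ht1.2 ht2.2
    have hadj' : H.Adj u.1 v.1 := hadj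
    have he0H : s(u.1, v.1) ∈ H.edgeSet := hadj'
    have he0cut : s(u.1, v.1) ∈ cutEdges G C := by
      rw [cutEdges, Finset.mem_filter]
      exact ⟨SimpleGraph.mem_edgeFinset.2 (hadj'.adj_sub), u.1, v.1, rfl, hu, hv⟩
    calc (1 : ℝ) = (if s(u.1, v.1) ∈ H.edgeSet then (1 : ℝ) else 0) := by rw [if_pos he0H]
      _ ≤ ∑ e ∈ cutEdges G C, (if e ∈ H.edgeSet then (1 : ℝ) else 0) :=
        Finset.single_le_sum (f := fun e => if e ∈ H.edgeSet then (1 : ℝ) else 0)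
          (fun e _ => by positivity) he0cut
  · rw [Finset.sum_boole]
    have hfil : G.edgeFinset.filter (fun e => e ∈ H.edgeSet) = H.edgeSet.toFinset := by
      ext e
      simp only [Finset.mem_filter, SimpleGraph.mem_edgeFinset, Set.mem_toFinset]
      exact ⟨fun h => h.2, fun h => ⟨H.edgeSet_subset h, h⟩⟩
    rw [hfil, Set.ncard_eq_toFinset_card']

end Steiner6

/-- For every finite connected simple graph `G` and every `K ⊆ V` with
`|K| ≥ 2`, `LP_ST(G,K) ≤ ST(G,K) ≤ 2 · LP_ST(G,K)`. -/
theorem statement6 (V : Type) [Fintype V] [DecidableEq V] (G : SimpleGraph V)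
    (hG : G.Connected) (K : Finset V) (hK : 2 ≤ K.card) :
    LPST G K ≤ (steinerCost G K : ℝ) ∧ (steinerCost G K : ℝ) ≤ 2 * LPST G K := by
  classical
  set LPset : Set ℝ := { y | ∃ x : Sym2 V → ℝ, (∀ e, 0 ≤ x e) ∧
    (∀ C : Finset V, IsCut C → (K ∩ C).Nonempty → (K \ C).Nonempty →
      1 ≤ ∑ e ∈ cutEdges G C, x e) ∧
    y = ∑ e ∈ G.edgeFinset, x e } with hLPset
  have hbdd : BddBelow LPset := by
    refine ⟨0, ?_⟩
    rintro y ⟨x, hx0, _, rfl⟩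
    exact Finset.sum_nonneg (fun e _ => hx0 e)
  -- the Steiner set is nonempty, and its infimum is attained
  have hSne : { n | ∃ H : G.Subgraph, H.Connected ∧ ↑K ⊆ H.verts ∧
      H.edgeSet.ncard = n }.Nonempty := by
    obtain ⟨H, h1, h2, _⟩ := Steiner6.exists_good_subgraph hG hK
    exact ⟨H.edgeSet.ncard, H, h1, h2, rfl⟩
  have hmemST := Nat.sInf_mem hSne
  obtain ⟨H0, hH0c, hH0sub, hH0card⟩ := hmemST
  obtain ⟨hx0, hfeas0, hsum0⟩ := Steiner6.feasible_of_subgraph (K := K) hG hH0c hH0sub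
  have hSTmem : (steinerCost G K : ℝ) ∈ LPset := by
    refine ⟨fun e => if e ∈ H0.edgeSet then (1 : ℝ) else 0, hx0, hfeas0, ?_⟩
    rw [hsum0, hH0card]
    rfl
  have hLPne : LPset.Nonempty := ⟨_, hSTmem⟩
  constructor
  · exact csInf_le hbdd hSTmem
  · -- the hard direction
    have hhalf : ∀ y ∈ LPset, (steinerCost G K : ℝ) / 2 ≤ y := by
      rintro y ⟨x, hx0', hfeas', rfl⟩
      have hprimal : steinerCost G K ≤ ∑ j ∈ Finset.range (Steiner6.TT G K),
          Steiner6.cc G K j := by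
        obtain ⟨H, h1, h2, h3⟩ := Steiner6.exists_good_subgraph hG hK
        exact le_trans (Nat.sInf_le ⟨H, h1, h2, rfl⟩) h3
      have hdual := Steiner6.dual_bound hG hK x hx0' hfeas'
      have hcast : (steinerCost G K : ℝ) ≤ ∑ j ∈ Finset.range (Steiner6.TT G K),
          (Steiner6.cc G K j : ℝ) := by
        push_cast
        exact_mod_cast Nat.cast_le.2 hprimal
      have : (steinerCost G K : ℝ) ≤ 2 * ∑ e ∈ G.edgeFinset, x e := hcast.trans hdual
      linarith
    have := le_csInf hLPne hhalf
    have h2 : (steinerCost G K : ℝ) / 2 ≤ LPST G K := this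
    linarith
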